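/- arXiv:1901.00618 — 2 statements merged into one kernel-verified Lean document; each statement's English description precedes it below -/
import Mathlib

section
/- Let r₀ > 0 and α₀, α₁ > 0. Define u : ℝ² → ℝ by u(x) = ‖x‖³/α₁ if ‖x‖ < r₀ and u(x) = ‖x‖³/α₀ + (1/α₁ − 1/α₀)·r₀³ if ‖x‖ ≥ r₀, define a : ℝ² → ℝ by a(x) = α₁ if ‖x‖ < r₀ and a(x) = α₀ if ‖x‖ ≥ r₀, and let f(x) = −9‖x‖. Then u is a weak solution of −∇·(a∇u) = f on ℝ²: for every continuously differentiable, compactly supported test function φ : ℝ² → ℝ, ∫_{ℝ²} a(x)⟪∇u(x), ∇φ(x)⟫ dx = ∫_{ℝ²} f(x)φ(x) dx, where ∇u(x) is the gradient of u at the points ‖x‖ ≠ r₀ at which it is differentiable (the remaining circle has Lebesgue measure zero). -/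
open MeasureTheory InnerProductSpace

noncomputable section
local notation "E" => EuclideanSpace ℝ (Fin 2)

def cc (i : Fin 2) (x : E) : ℝ := 3 * ‖x‖ * x i

def DD (i : Fin 2) (x : E) : E →L[ℝ] ℝ :=
  (3 * x i) • innerSL ℝ ((‖x‖⁻¹ : ℝ) • x) + (3 * ‖x‖) • EuclideanSpace.proj i

lemma abs_apply_le (i : Fin 2) (x : E) : |x i| ≤ ‖x‖ := by
  have h1 : ‖x i‖ ^ 2 ≤ ∑ j, ‖x j‖ ^ 2 :=
    Finset.single_le_sum (f := fun j => ‖x j‖^2) (fun j _ => by positivity)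
      (Finset.mem_univ i)
  have h2 := EuclideanSpace.norm_eq x
  rw [h2]
  rw [show |x i| = ‖x i‖ from rfl, ← Real.sqrt_sq (norm_nonneg (x i))]
  exact Real.sqrt_le_sqrt h1

lemma hasFDerivAt_norm' {x : E} (hx : x ≠ 0) :
    HasFDerivAt (fun y : E => ‖y‖) (innerSL ℝ ((‖x‖⁻¹ : ℝ) • x)) x := by
  have hn : (0:ℝ) < ‖x‖ := norm_pos_iff.2 hx
  have h1 : HasFDerivAt (fun y : E => ‖y‖ ^ 2) (2 • (innerSL ℝ x)) x :=
    (hasStrictFDerivAt_norm_sq x).hasFDerivAt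
  have h2 : HasDerivAt Real.sqrt (1 / (2 * Real.sqrt (‖x‖ ^ 2))) (‖x‖ ^ 2) :=
    Real.hasDerivAt_sqrt (by positivity)
  have h3 := h2.comp_hasFDerivAt x h1
  have hfun : (fun y : E => Real.sqrt (‖y‖ ^ 2)) = fun y : E => ‖y‖ := by
    funext y; rw [Real.sqrt_sq (norm_nonneg y)]
  rw [Function.comp_def, hfun] at h3
  refine h3.congr_fderiv ?_
  ext y
  rw [Real.sqrt_sq (norm_nonneg x)]
  simp [inner_smul_left]
  ring

lemma hasFDerivAt_cc (i : Fin 2) (x : E) : HasFDerivAt (cc i) (DD i x) x := by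
  rcases eq_or_ne x 0 with rfl | hx
  · have hD : DD i (0:E) = 0 := by
      ext y; simp [DD]
    rw [hD]
    rw [hasFDerivAt_iff_isLittleO_nhds_zero]
    rw [Asymptotics.isLittleO_iff]
    intro ε hε
    filter_upwards [Metric.ball_mem_nhds (0:E) (show (0:ℝ) < ε/3 by linarith)] with h hh
    simp only [cc, zero_add, norm_zero, mul_zero, ContinuousLinearMap.zero_apply, sub_zero,
      show ((0:E) i = 0) from rfl, mul_zero, sub_zero]
    have h1 : |h i| ≤ ‖h‖ := abs_apply_le i h
    have h2 : ‖h‖ < ε / 3 := by simpa [Metric.mem_ball] using hh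
    have : |3 * ‖h‖ * h i| ≤ 3 * ‖h‖ * ‖h‖ := by
      rw [abs_mul, abs_of_nonneg (by positivity : (0:ℝ) ≤ 3 * ‖h‖)]
      exact mul_le_mul_of_nonneg_left h1 (by positivity)
    calc ‖3 * ‖h‖ * h i‖ = |3 * ‖h‖ * h i| := rfl
    _ ≤ 3 * ‖h‖ * ‖h‖ := this
    _ ≤ ε * ‖h‖ := by nlinarith [norm_nonneg h]
  · have h1 : HasFDerivAt (fun y : E => 3 * ‖y‖) ((3:ℝ) • innerSL ℝ ((‖x‖⁻¹:ℝ) • x)) x :=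
      (hasFDerivAt_norm' hx).const_mul 3
    have h2 : HasFDerivAt (fun y : E => y i) (EuclideanSpace.proj (𝕜 := ℝ) i) x :=
      (EuclideanSpace.proj (𝕜 := ℝ) i).hasFDerivAt
    have h3 := h1.mul h2
    refine h3.congr_fderiv ?_
    ext y
    simp [DD, inner_smul_left]
    ring

lemma DD_apply (i : Fin 2) (x : E) :
    DD i x (EuclideanSpace.single i 1) = 3 * x i * (‖x‖⁻¹ * x i) + 3 * ‖x‖ := by
  fin_cases i <;>
    simp [DD, PiLp.inner_apply, EuclideanSpace.single_apply, Fin.sum_univ_two] <;> ring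

lemma sum_sq_eq (x : E) : ∑ i, x i ^ 2 = ‖x‖ ^ 2 := by
  have h2 := EuclideanSpace.norm_eq x
  rw [h2, Real.sq_sqrt (by positivity)]
  congr 1; funext j; rw [Real.norm_eq_abs, sq_abs]

lemma div_sum (x : E) : ∑ i, DD i x (EuclideanSpace.single i 1) = 9 * ‖x‖ := by
  rcases eq_or_ne x 0 with rfl | hx
  · simp [DD_apply, show ∀ i : Fin 2, ((0:E) i = 0) from fun _ => rfl]
  · have hn : (0:ℝ) < ‖x‖ := norm_pos_iff.2 hx
    simp only [DD_apply]
    have : ∑ i : Fin 2, (3 * x i * (‖x‖⁻¹ * x i) + 3 * ‖x‖)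
        = 3 * ‖x‖⁻¹ * (∑ i, x i ^ 2) + 2 * (3 * ‖x‖) := by
      rw [Fin.sum_univ_two, Fin.sum_univ_two]
      ring
    rw [this, sum_sq_eq]
    field_simp
    ring

lemma DD_bound (i : Fin 2) (x : E) : |DD i x (EuclideanSpace.single i 1)| ≤ 6 * ‖x‖ := by
  rw [DD_apply]
  rcases eq_or_ne x 0 with rfl | hx
  · simp [show ((0:E) i = 0) from rfl]
  · have hn : (0:ℝ) < ‖x‖ := norm_pos_iff.2 hx
    have h1 : |x i| ≤ ‖x‖ := abs_apply_le i x
    have : |3 * x i * (‖x‖⁻¹ * x i)| ≤ 3 * ‖x‖ := by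
      rw [abs_mul, abs_mul, abs_mul]
      rw [abs_of_nonneg (by positivity : (0:ℝ) ≤ ‖x‖⁻¹)]
      have : |(3:ℝ)| * |x i| * (‖x‖⁻¹ * |x i|) ≤ 3 * ‖x‖ * (‖x‖⁻¹ * ‖x‖) := by
        have := abs_nonneg (x i)
        have h2 : ‖x‖⁻¹ * |x i| ≤ ‖x‖⁻¹ * ‖x‖ := by
          apply mul_le_mul_of_nonneg_left h1 (by positivity)
        calc |(3:ℝ)| * |x i| * (‖x‖⁻¹ * |x i|) ≤ 3 * ‖x‖ * (‖x‖⁻¹ * |x i|) := by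
              rw [abs_of_nonneg (by norm_num : (0:ℝ) ≤ 3)]
              apply mul_le_mul_of_nonneg_right _ (by positivity)
              nlinarith
        _ ≤ 3 * ‖x‖ * (‖x‖⁻¹ * ‖x‖) := mul_le_mul_of_nonneg_left h2 (by positivity)
      calc |(3:ℝ)| * |x i| * (‖x‖⁻¹ * |x i|) ≤ 3 * ‖x‖ * (‖x‖⁻¹ * ‖x‖) := this
      _ = 3 * ‖x‖ := by field_simp
    calc |3 * x i * (‖x‖⁻¹ * x i) + 3 * ‖x‖| ≤ |3 * x i * (‖x‖⁻¹ * x i)| + |3 * ‖x‖| :=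
          abs_add_le _ _
    _ ≤ 3 * ‖x‖ + 3 * ‖x‖ := by
        apply add_le_add this; rw [abs_of_nonneg (by positivity)]
    _ = 6 * ‖x‖ := by ring

lemma hasFDerivAt_norm_cube {x : E} (hx : x ≠ 0) :
    HasFDerivAt (fun y : E => ‖y‖ ^ 3) (innerSL ℝ ((3 * ‖x‖ : ℝ) • x)) x := by
  have hn : (0:ℝ) < ‖x‖ := norm_pos_iff.2 hx
  have h3 := (hasDerivAt_pow 3 ‖x‖).comp_hasFDerivAt x (hasFDerivAt_norm' hx)
  rw [Function.comp_def] at h3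
  refine h3.congr_fderiv ?_
  ext y
  simp [inner_smul_left]
  field_simp

lemma grad_u {r₀ α₀ α₁ : ℝ} (hr₀ : 0 < r₀) {u : E → ℝ}
    (hu : ∀ x : E, u x =
      if ‖x‖ < r₀ then ‖x‖ ^ 3 / α₁ else ‖x‖ ^ 3 / α₀ + (1 / α₁ - 1 / α₀) * r₀ ^ 3)
    {x : E} (hx : x ≠ 0) (hxr : ‖x‖ ≠ r₀) :
    HasGradientAt u ((3 * ‖x‖ / (if ‖x‖ < r₀ then α₁ else α₀)) • x) x := by
  set α : ℝ := if ‖x‖ < r₀ then α₁ else α₀ with hα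
  set C : ℝ := if ‖x‖ < r₀ then 0 else (1 / α₁ - 1 / α₀) * r₀ ^ 3 with hC
  have hev : u =ᶠ[nhds x] fun y => α⁻¹ * ‖y‖ ^ 3 + C := by
    by_cases h : ‖x‖ < r₀
    · have : {y : E | ‖y‖ < r₀} ∈ nhds x :=
        (isOpen_lt continuous_norm continuous_const).mem_nhds h
      filter_upwards [this] with y hy
      rw [hu y, if_pos hy, hα, hC, if_pos h, if_pos h]
      ring
    · have hgt : r₀ < ‖x‖ := lt_of_le_of_ne (not_lt.1 h) (Ne.symm hxr)
      have : {y : E | r₀ < ‖y‖} ∈ nhds x :=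
        (isOpen_lt continuous_const continuous_norm).mem_nhds hgt
      filter_upwards [this] with y hy
      rw [hu y, if_neg (not_lt.2 (le_of_lt hy)), hα, hC, if_neg h, if_neg h]
      ring
  have h1 : HasFDerivAt (fun y : E => α⁻¹ * ‖y‖ ^ 3 + C)
      (innerSL ℝ ((3 * ‖x‖ / α) • x)) x := by
    have h2 := ((hasFDerivAt_norm_cube hx).const_mul α⁻¹).add_const C
    refine h2.congr_fderiv ?_
    ext y
    simp [inner_smul_left]
    ring
  have h3 : HasFDerivAt u (innerSL ℝ ((3 * ‖x‖ / α) • x)) x :=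
    h1.congr_of_eventuallyEq hev
  rw [hasGradientAt_iff_hasFDerivAt]
  exact h3

lemma decomp (x : E) : x = ∑ i, x i • EuclideanSpace.single i (1:ℝ) := by
  ext j
  rw [Fin.sum_univ_two]
  simp [EuclideanSpace.single_apply]
  fin_cases j <;> simp

lemma inner_gradient (φ : E → ℝ) (x y : E) :
    ⟪gradient φ x, y⟫_ℝ = fderiv ℝ φ x y := by
  rw [gradient]
  exact InnerProductSpace.toDual_symm_apply

/-- The exact piecewise function `u = r³/α₁` for `r < r₀`, `u = r³/α₀ + (1/α₁ − 1/α₀)r₀³`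
for `r ≥ r₀`, with piecewise constant coefficient `a = α₁` inside the disk of radius `r₀`
and `a = α₀` outside, is a weak solution of `−∇·(a∇u) = f` with `f(x) = −9‖x‖` on all of
`ℝ²`: for every continuously differentiable, compactly supported test function `φ`,
`∫ a ⟪∇u, ∇φ⟫ = ∫ f φ`. (Here `gradient u` is the Mathlib gradient, which agrees with the
gradient of `u` at the points `‖x‖ ≠ r₀` where `u` is differentiable; the remaining
circle has Lebesgue measure zero.) -/
theorem interface_solution_is_weak_solution
    (r₀ α₀ α₁ : ℝ) (hr₀ : 0 < r₀) (hα₀ : 0 < α₀) (hα₁ : 0 < α₁)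
    (u : EuclideanSpace ℝ (Fin 2) → ℝ) (a f : EuclideanSpace ℝ (Fin 2) → ℝ)
    (hu : ∀ x, u x =
      if ‖x‖ < r₀ then ‖x‖ ^ 3 / α₁ else ‖x‖ ^ 3 / α₀ + (1 / α₁ - 1 / α₀) * r₀ ^ 3)
    (ha : ∀ x, a x = if ‖x‖ < r₀ then α₁ else α₀)
    (hf : ∀ x, f x = -9 * ‖x‖) :
    ∀ φ : EuclideanSpace ℝ (Fin 2) → ℝ, ContDiff ℝ 1 φ → HasCompactSupport φ →
      ∫ x, a x * ⟪gradient u x, gradient φ x⟫_ℝ = ∫ x, f x * φ x := by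
  intro φ hφ hφs
  have hφd : Differentiable ℝ φ := hφ.differentiable one_ne_zero
  set e : Fin 2 → E := fun i => EuclideanSpace.single i (1:ℝ) with he
  -- null set
  have hnull : volume {x : E | ¬(x ≠ 0 ∧ ‖x‖ ≠ r₀)} = 0 := by
    refine measure_mono_null (fun x hx => ?_)
      (measure_union_null (measure_singleton (0:E)) (Measure.addHaar_sphere volume 0 r₀))
    simp only [Set.mem_setOf_eq, not_and_or, not_ne_iff] at hx
    rcases hx with h | h
    · exact Or.inl (by simpa using h)
    · exact Or.inr (by simpa [mem_sphere_zero_iff_norm] using h)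
  -- a.e. identity
  have key : (fun x => a x * ⟪gradient u x, gradient φ x⟫_ℝ)
      =ᵐ[volume] fun x => ∑ i, cc i x * fderiv ℝ φ x (e i) := by
    rw [Filter.eventuallyEq_iff_exists_mem]
    refine ⟨{x : E | x ≠ 0 ∧ ‖x‖ ≠ r₀}, ?_, ?_⟩
    · rw [mem_ae_iff]
      exact hnull
    · intro x hx
      obtain ⟨hx0, hxr⟩ := hx
      show a x * ⟪gradient u x, gradient φ x⟫_ℝ = ∑ i, cc i x * fderiv ℝ φ x (e i)
      have hg := (grad_u hr₀ hu hx0 hxr).gradient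
      set α : ℝ := if ‖x‖ < r₀ then α₁ else α₀ with hα
      have hαpos : 0 < α := by rw [hα]; split <;> assumption
      have hy : ∀ y : E, fderiv ℝ φ x y = ∑ i, y i * fderiv ℝ φ x (e i) := by
        intro y
        conv_lhs => rw [decomp y]
        rw [map_sum]
        simp only [ContinuousLinearMap.map_smul, smul_eq_mul, he]
      have hsum : ∑ i, cc i x * fderiv ℝ φ x (e i) = 3 * ‖x‖ * fderiv ℝ φ x x := by
        rw [hy x, Finset.mul_sum]
        apply Finset.sum_congr rfl
        intro i _
        simp only [cc]
        ring
      rw [hsum, hg, ha x, ← hα, real_inner_smul_left, real_inner_comm,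
        inner_gradient]
      field_simp
  rw [integral_congr_ae key]
  -- continuity and support facts
  have hcontD : Continuous (fderiv ℝ φ) := hφ.continuous_fderiv one_ne_zero
  have hcdφ : ∀ i, Continuous fun x => fderiv ℝ φ x (e i) := fun i =>
    (ContinuousLinearMap.apply ℝ ℝ (e i)).continuous.comp hcontD
  have hsdφ : ∀ i, HasCompactSupport fun x => fderiv ℝ φ x (e i) := fun i =>
    hφs.fderiv_apply ℝ (e i)
  have hccc : ∀ i, Continuous (cc i) := fun i =>
    (continuous_const.mul continuous_norm).mul (EuclideanSpace.proj (𝕜 := ℝ) i).continuous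
  have hint1 : ∀ i, Integrable (fun x => cc i x * fderiv ℝ φ x (e i)) := by
    intro i
    exact ((hccc i).mul (hcdφ i)).integrable_of_hasCompactSupport
      ((hsdφ i).mul_left)
  have habs : Integrable (fun x : E => 6 * ‖x‖ * ‖φ x‖) := by
    apply Continuous.integrable_of_hasCompactSupport
    · exact (continuous_const.mul continuous_norm).mul (hφ.continuous.norm)
    · exact (hφs.norm).mul_left
  have hfd : ∀ i (x : E), fderiv ℝ (cc i) x = DD i x := fun i x => (hasFDerivAt_cc i x).fderiv
  have hDmeas : ∀ i, AEStronglyMeasurable (fun x : E => DD i x (e i) * φ x) volume := by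
    intro i
    apply AEStronglyMeasurable.mul _ hφ.continuous.aestronglyMeasurable
    have hform : (fun x : E => DD i x (e i)) =
        fun x : E => 3 * x i * (‖x‖⁻¹ * x i) + 3 * ‖x‖ := funext fun x => DD_apply i x
    rw [hform]
    apply Measurable.aestronglyMeasurable
    have hxi : Measurable fun x : E => x i := (EuclideanSpace.proj (𝕜 := ℝ) i).continuous.measurable
    have hn : Measurable fun x : E => ‖x‖ := continuous_norm.measurable
    exact ((measurable_const.mul hxi).mul (hn.inv.mul hxi)).add (measurable_const.mul hn)
  have hint2 : ∀ i, Integrable (fun x : E => DD i x (e i) * φ x) := by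
    intro i
    apply habs.mono' (hDmeas i)
    filter_upwards with x
    rw [norm_mul]
    calc ‖DD i x (e i)‖ * ‖φ x‖ ≤ (6 * ‖x‖) * ‖φ x‖ :=
          mul_le_mul_of_nonneg_right (DD_bound i x) (norm_nonneg _)
    _ = 6 * ‖x‖ * ‖φ x‖ := by ring
  have hibp : ∀ i, ∫ x, cc i x * fderiv ℝ φ x (e i) = - ∫ x, DD i x (e i) * φ x := by
    intro i
    have h1 : Integrable (fun x : E => fderiv ℝ (cc i) x (e i) * φ x) := by
      simp only [hfd]; exact hint2 i
    have h3 : Integrable (fun x : E => cc i x * φ x) :=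
      ((hccc i).mul hφ.continuous).integrable_of_hasCompactSupport hφs.mul_left
    have heq := integral_mul_fderiv_eq_neg_fderiv_mul_of_integrable
      (f := cc i) (g := φ) (v := e i) h1 (hint1 i) h3
      (fun x _ => (hasFDerivAt_cc i x).differentiableAt) (fun x _ => hφd x)
    simp only [hfd] at heq
    exact heq
  rw [integral_finset_sum _ (fun i _ => hint1 i)]
  calc ∑ i, ∫ x, cc i x * fderiv ℝ φ x (e i)
      = ∑ i, -∫ x, DD i x (e i) * φ x := Finset.sum_congr rfl (fun i _ => hibp i)
    _ = -∑ i, ∫ x, DD i x (e i) * φ x := by rw [Finset.sum_neg_distrib]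
    _ = -∫ x, ∑ i, DD i x (e i) * φ x := by
        rw [integral_finset_sum _ (fun i _ => hint2 i)]
    _ = ∫ x, f x * φ x := by
        rw [← integral_neg]
        congr 1
        funext x
        rw [← Finset.sum_mul, div_sum x, hf x]
        ring

end
end

section
/- Let D ⊆ ℝ² be a measurable set, Ω ⊆ ℝ² a measurable subset, and λ, μ ∈ ℝ. Let u, φ : ℝ² → ℝ² be differentiable vector fields such that the integrands (tr e(u))², (tr e(φ))², tr e(u)·tr e(φ), e(u):e(u), e(φ):e(φ), e(u):e(φ), χ_Ω·tr e(u) and χ_Ω·tr e(φ) are all integrable on D. If J(u) ≤ J(u + t·φ) for every t ∈ ℝ, then the weak form of the linear elasticity interface equation holds: ∫_D [ λ·tr(e(u))·tr(e(φ)) + 2μ·e(u):e(φ) + 2(λ+μ)·χ_Ω(x)·tr(e(φ)) ] dx = 0. -/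
open MeasureTheory

/-- The strain tensor `e(v)(x) = (1/2)(Dv(x) + Dv(x)ᵀ)` of a vector field `v : ℝ² → ℝ²`,
where `Dv(x)` is the Jacobian matrix of `v` at `x`. -/
noncomputable def strain (v : EuclideanSpace ℝ (Fin 2) → EuclideanSpace ℝ (Fin 2))
    (x : EuclideanSpace ℝ (Fin 2)) : Matrix (Fin 2) (Fin 2) ℝ :=
  Matrix.of fun i j => (1 / 2) *
    (fderiv ℝ v x (EuclideanSpace.single j 1) i + fderiv ℝ v x (EuclideanSpace.single i 1) j)

/-- The Frobenius inner product `A:B = Σ_{i,j} A_{ij} B_{ij}` of 2×2 matrices. -/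
def mdot (A B : Matrix (Fin 2) (Fin 2) ℝ) : ℝ := ∑ i : Fin 2, ∑ j : Fin 2, A i j * B i j

/-- The elastic energy functional
`J(v) = ∫_D [ (λ/2)(tr e(v))² + μ e(v):e(v) + 2(λ+μ) χ_Ω tr e(v) ] dx`
of the linear elasticity interface problem. -/
noncomputable def elasticJ (D Ω : Set (EuclideanSpace ℝ (Fin 2))) (lam mu : ℝ)
    (v : EuclideanSpace ℝ (Fin 2) → EuclideanSpace ℝ (Fin 2)) : ℝ :=
  ∫ x in D, ((lam / 2) * (Matrix.trace (strain v x)) ^ 2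
    + mu * mdot (strain v x) (strain v x)
    + 2 * (lam + mu) * Set.indicator Ω (fun _ => (1 : ℝ)) x * Matrix.trace (strain v x))


lemma strain_add_smul (u φ : EuclideanSpace ℝ (Fin 2) → EuclideanSpace ℝ (Fin 2))
    (hu : Differentiable ℝ u) (hφ : Differentiable ℝ φ) (t : ℝ)
    (x : EuclideanSpace ℝ (Fin 2)) :
    strain (fun y => u y + t • φ y) x = strain u x + t • strain φ x := by
  have hf : fderiv ℝ (fun y => u y + t • φ y) x = fderiv ℝ u x + t • fderiv ℝ φ x :=
    ((hu x).hasFDerivAt.add (((hφ x).hasFDerivAt).const_smul t)).fderiv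
  ext i j
  simp [strain, hf, Matrix.add_apply, Matrix.smul_apply, smul_eq_mul]
  ring

lemma quad_key (A B : ℝ) (h : ∀ t : ℝ, 0 ≤ t * A + t ^ 2 * B) : A = 0 := by
  have hd : HasDerivAt (fun t : ℝ => t * A + t ^ 2 * B) A 0 := by
    have h1 : HasDerivAt (fun t : ℝ => t * A) A 0 := by
      simpa using (hasDerivAt_id (0 : ℝ)).mul_const A
    have h2 : HasDerivAt (fun t : ℝ => t ^ 2 * B) 0 0 := by
      simpa using (hasDerivAt_pow 2 (0 : ℝ)).mul_const B
    simpa using h1.fun_add h2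
  have hloc : IsLocalMin (fun t : ℝ => t * A + t ^ 2 * B) 0 :=
    Filter.Eventually.of_forall fun t => by simpa using h t
  exact hloc.hasDerivAt_eq_zero hd

/-- If `u` minimizes the elastic energy functional along every line `u + t φ`, then the
weak form of the linear elasticity interface equation holds. -/
theorem elastic_eulerLagrange_of_min
    (D Ω : Set (EuclideanSpace ℝ (Fin 2))) (hD : MeasurableSet D) (hΩ : MeasurableSet Ω)
    (lam mu : ℝ)
    (u φ : EuclideanSpace ℝ (Fin 2) → EuclideanSpace ℝ (Fin 2))
    (hu : Differentiable ℝ u) (hφ : Differentiable ℝ φ)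
    (h1 : IntegrableOn (fun x => (Matrix.trace (strain u x)) ^ 2) D)
    (h2 : IntegrableOn (fun x => (Matrix.trace (strain φ x)) ^ 2) D)
    (h3 : IntegrableOn (fun x => Matrix.trace (strain u x) * Matrix.trace (strain φ x)) D)
    (h4 : IntegrableOn (fun x => mdot (strain u x) (strain u x)) D)
    (h5 : IntegrableOn (fun x => mdot (strain φ x) (strain φ x)) D)
    (h6 : IntegrableOn (fun x => mdot (strain u x) (strain φ x)) D)
    (h7 : IntegrableOn
      (fun x => Set.indicator Ω (fun _ => (1 : ℝ)) x * Matrix.trace (strain u x)) D)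
    (h8 : IntegrableOn
      (fun x => Set.indicator Ω (fun _ => (1 : ℝ)) x * Matrix.trace (strain φ x)) D)
    (hmin : ∀ t : ℝ,
      elasticJ D Ω lam mu u ≤ elasticJ D Ω lam mu (fun x => u x + t • φ x)) :
    ∫ x in D, (lam * Matrix.trace (strain u x) * Matrix.trace (strain φ x)
      + 2 * mu * mdot (strain u x) (strain φ x)
      + 2 * (lam + mu) * Set.indicator Ω (fun _ => (1 : ℝ)) x * Matrix.trace (strain φ x))
      = 0 := by
  set g : EuclideanSpace ℝ (Fin 2) → ℝ := fun x =>
    lam * Matrix.trace (strain u x) * Matrix.trace (strain φ x)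
      + 2 * mu * mdot (strain u x) (strain φ x)
      + 2 * (lam + mu) * Set.indicator Ω (fun _ => (1 : ℝ)) x * Matrix.trace (strain φ x)
    with hg
  set q : EuclideanSpace ℝ (Fin 2) → ℝ := fun x =>
    (lam / 2) * (Matrix.trace (strain φ x)) ^ 2 + mu * mdot (strain φ x) (strain φ x)
    with hq
  have hgint : IntegrableOn g D := by
    refine Integrable.add (Integrable.add ?_ ?_) ?_
    · simpa [mul_assoc] using h3.const_mul lam
    · simpa [mul_assoc] using h6.const_mul (2 * mu)
    · simpa [mul_assoc] using h8.const_mul (2 * (lam + mu))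
  have hqint : IntegrableOn q D := (h2.const_mul _).add (h5.const_mul _)
  have hJ : ∀ t : ℝ, elasticJ D Ω lam mu (fun x => u x + t • φ x)
      = elasticJ D Ω lam mu u + t * (∫ x in D, g x) + t ^ 2 * (∫ x in D, q x) := by
    intro t
    have hpt : (fun x => (lam / 2) * (Matrix.trace (strain (fun y => u y + t • φ y) x)) ^ 2
        + mu * mdot (strain (fun y => u y + t • φ y) x) (strain (fun y => u y + t • φ y) x)
        + 2 * (lam + mu) * Set.indicator Ω (fun _ => (1 : ℝ)) x
            * Matrix.trace (strain (fun y => u y + t • φ y) x))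
        = fun x => ((lam / 2) * (Matrix.trace (strain u x)) ^ 2
            + mu * mdot (strain u x) (strain u x)
            + 2 * (lam + mu) * Set.indicator Ω (fun _ => (1 : ℝ)) x
                * Matrix.trace (strain u x))
          + (t * g x + t ^ 2 * q x) := by
      funext x
      rw [strain_add_smul u φ hu hφ t x]
      simp only [hg, hq, mdot, Matrix.trace, Matrix.diag, Matrix.add_apply,
        Matrix.smul_apply, smul_eq_mul, Fin.sum_univ_two]
      ring
    have hfint : IntegrableOn (fun x => (lam / 2) * (Matrix.trace (strain u x)) ^ 2
        + mu * mdot (strain u x) (strain u x)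
        + 2 * (lam + mu) * Set.indicator Ω (fun _ => (1 : ℝ)) x
            * Matrix.trace (strain u x)) D :=
      ((h1.const_mul _).add (h4.const_mul _)).add
        (by simpa [mul_assoc] using h7.const_mul (2 * (lam + mu)))
    have hgt : IntegrableOn (fun x => t * g x) D := hgint.const_mul t
    have hqt : IntegrableOn (fun x => t ^ 2 * q x) D := hqint.const_mul (t ^ 2)
    have hgq : IntegrableOn (fun x => t * g x + t ^ 2 * q x) D := hgt.add hqt
    rw [elasticJ, hpt, integral_add hfint hgq, integral_add hgt hqt,
        integral_const_mul, integral_const_mul, elasticJ, add_assoc]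
  have hkey : ∀ t : ℝ, 0 ≤ t * (∫ x in D, g x) + t ^ 2 * (∫ x in D, q x) := by
    intro t
    have := hmin t
    rw [hJ t] at this
    linarith
  exact quad_key _ _ hkey
end
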